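/- Let n ≥ 2. There exists a constant C_n > 0, depending only on n, such that for all τ > 0, h > 0, K > 0, every unit vector v̂' ∈ ℝ^{n−1}, and ξ = iτ(v̂', 0) − τe_n ∈ ℂⁿ, the function E_ξ is integrable on the region { x = (x', x_n) ∈ ℝⁿ : x_n > max(h, K|x'|²) } and |∫_{{x_n > max(h, K|x'|²)}} E_ξ(x) dx| ≤ C_n (1 + (τh)^{(n−1)/2}) τ^{−(n+1)/2} K^{−(n−1)/2} e^{−τh}. -/

import Mathlib

open MeasureTheory Set Real




lemma aux_integral_exp_neg_mul_Ioi {b : ℝ} (hb : 0 < b) (a : ℝ) :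
    ∫ x in Set.Ioi a, Real.exp (-(b*x)) = b⁻¹ * Real.exp (-(b*a)) := by
  have := integral_comp_mul_left_Ioi (fun u => Real.exp (-u)) a hb
  simp only [smul_eq_mul, integral_exp_neg_Ioi] at this
  exact this

lemma aux_integrable_rexp_gauss {m : ℕ} {b : ℝ} (hb : 0 < b) :
    Integrable (fun y : EuclideanSpace ℝ (Fin m) => Real.exp (-b * ‖y‖^2)) := by
  have h1 : Integrable (fun y : EuclideanSpace ℝ (Fin m) =>
      Complex.exp (-(b:ℂ) * (‖y‖:ℂ)^2 + 0 * ((inner ℝ (0 : EuclideanSpace ℝ (Fin m)) y : ℝ) : ℂ))) :=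
    GaussianFourier.integrable_cexp_neg_mul_sq_norm_add (by simpa using hb) 0 0
  apply h1.norm.congr
  filter_upwards with y
  simp [Complex.norm_exp, ← Complex.ofReal_pow]

noncomputable def phiAux (a b : ℝ) (s : ℝ) : ℝ :=
  Set.indicator (Set.Icc (-a) a) (fun _ => (1:ℝ)) s
    + Real.exp (-b * (s - a)^2) + Real.exp (-b * (s + a)^2)

lemma phiAux_nonneg (a b s : ℝ) : 0 ≤ phiAux a b s := by
  unfold phiAux
  have : (0:ℝ) ≤ Set.indicator (Set.Icc (-a) a) (fun _ => (1:ℝ)) s :=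
    Set.indicator_nonneg (fun _ _ => zero_le_one) s
  positivity

lemma phiAux_integrable {a b : ℝ} (hb : 0 < b) : Integrable (phiAux a b) := by
  unfold phiAux
  apply Integrable.add
  apply Integrable.add
  · rw [integrable_indicator_iff measurableSet_Icc]
    exact integrableOn_const (by simp [Real.volume_Icc])
  · exact (integrable_exp_neg_mul_sq hb).comp_sub_right a
  · exact (integrable_exp_neg_mul_sq hb).comp_add_right a

lemma phiAux_integral {a b : ℝ} (ha : 0 ≤ a) (hb : 0 < b) :
    ∫ s, phiAux a b s = 2*a + 2*Real.sqrt (π / b) := by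
  have h1 : Integrable (fun s => Set.indicator (Set.Icc (-a) a) (fun _ => (1:ℝ)) s) := by
    rw [integrable_indicator_iff measurableSet_Icc]
    exact integrableOn_const (by simp [Real.volume_Icc])
  have h2 : Integrable (fun s => Real.exp (-b * (s - a)^2)) :=
    (integrable_exp_neg_mul_sq hb).comp_sub_right a
  have h3 : Integrable (fun s => Real.exp (-b * (s + a)^2)) :=
    (integrable_exp_neg_mul_sq hb).comp_add_right a
  have h12 : Integrable (fun s => Set.indicator (Set.Icc (-a) a) (fun _ => (1:ℝ)) s
      + Real.exp (-b * (s - a)^2)) := h1.add h2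
  unfold phiAux
  rw [integral_add h12 h3, integral_add h1 h2]
  have e1 : ∫ s, Set.indicator (Set.Icc (-a) a) (fun _ => (1:ℝ)) s = 2*a := by
    rw [integral_indicator_const (1:ℝ) measurableSet_Icc]
    simp [Real.volume_Icc]
    rw [max_eq_left (by linarith)]
    ring
  have e2 : ∫ s, Real.exp (-b * (s - a)^2) = Real.sqrt (π / b) := by
    rw [integral_sub_right_eq_self (fun s => Real.exp (-b * s^2)) a, integral_gaussian]
  have e3 : ∫ s, Real.exp (-b * (s + a)^2) = Real.sqrt (π / b) := by
    rw [integral_add_right_eq_self (fun s => Real.exp (-b * s^2)) a, integral_gaussian]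
  rw [e1, e2, e3]; ring



lemma phiAux_pointwise {c t : ℝ} (hc : 0 < c) (ht : 0 ≤ t) {m : ℕ} (hm : 1 ≤ m) (s : ℝ) :
    Real.exp (-(max 0 (c * s^2 - t) / m)) ≤ phiAux (Real.sqrt (t/c)) (c/m) s := by
  set a := Real.sqrt (t/c) with ha
  have ha0 : 0 ≤ a := Real.sqrt_nonneg _
  have ha2 : a^2 = t/c := Real.sq_sqrt (by positivity)
  have hmp : (0:ℝ) < m := by exact_mod_cast hm
  unfold phiAux
  rcases le_or_gt (c * s^2) t with hle | hlt
  · have hmax : max 0 (c * s^2 - t) = 0 := max_eq_left (by linarith)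
    have hsa : s ∈ Set.Icc (-a) a := by
      have hs2 : s^2 ≤ a^2 := by
        rw [ha2, le_div_iff₀ hc]
        linarith [mul_comm c (s^2)]
      constructor
      · nlinarith [abs_nonneg s, sq_abs s, neg_abs_le s]
      · nlinarith [sq_abs s, le_abs_self s]
    rw [Set.indicator_of_mem hsa, hmax]
    simp only [zero_div, neg_zero, Real.exp_zero]
    nlinarith [Real.exp_pos (-(c/(m:ℝ)) * (s - a)^2), Real.exp_pos (-(c/(m:ℝ)) * (s + a)^2)]
  · have hmax : max 0 (c * s^2 - t) = c * s^2 - t := max_eq_right (by linarith)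
    have hs2 : a^2 < s^2 := by
      rw [ha2, div_lt_iff₀ hc]
      nlinarith
    have habs : a < |s| := by
      have := Real.sqrt_lt_sqrt (by positivity) hs2
      simp only [Real.sqrt_sq_eq_abs] at this
      rwa [abs_of_nonneg ha0] at this
    have hind : (0:ℝ) ≤ Set.indicator (Set.Icc (-a) a) (fun _ => (1:ℝ)) s :=
      Set.indicator_nonneg (fun _ _ => zero_le_one) s
    have key : (c/(m:ℝ)) * (|s| - a)^2 ≤ (c * s^2 - t) / m := by
      rw [div_mul_eq_mul_div, div_le_div_iff₀ hmp hmp]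
      have h1 : c * (|s| - a)^2 ≤ c * (s^2 - a^2) := by
        apply mul_le_mul_of_nonneg_left _ hc.le
        nlinarith [sq_abs s]
      have h2 : c * (s^2 - a^2) = c * s^2 - t := by
        rw [ha2]; field_simp
      nlinarith
    rcases le_or_gt 0 s with hs | hs
    · rw [abs_of_nonneg hs] at key
      have h2 : Real.exp (-(max 0 (c * s^2 - t) / m)) ≤ Real.exp (-(c/(m:ℝ)) * (s - a)^2) := by
        apply Real.exp_le_exp.2
        rw [hmax, neg_mul]
        exact neg_le_neg key
      calc Real.exp (-(max 0 (c * s^2 - t) / m)) ≤ Real.exp (-(c/(m:ℝ)) * (s - a)^2) := h2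
        _ ≤ _ := by linarith [hind, Real.exp_pos (-(c/(m:ℝ)) * (s + a)^2)]
    · rw [abs_of_neg hs, show (-s - a)^2 = (s + a)^2 by ring] at key
      have h2 : Real.exp (-(max 0 (c * s^2 - t) / m)) ≤ Real.exp (-(c/(m:ℝ)) * (s + a)^2) := by
        apply Real.exp_le_exp.2
        rw [hmax, neg_mul]
        exact neg_le_neg key
      calc Real.exp (-(max 0 (c * s^2 - t) / m)) ≤ Real.exp (-(c/(m:ℝ)) * (s + a)^2) := h2
        _ ≤ _ := by linarith [hind, Real.exp_pos (-(c/(m:ℝ)) * (s - a)^2)]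



lemma euclid_norm_sq {m : ℕ} (y : EuclideanSpace ℝ (Fin m)) : ‖y‖^2 = ∑ i, (y i)^2 := by
  rw [EuclideanSpace.norm_eq]
  rw [Real.sq_sqrt (Finset.sum_nonneg fun i _ => by positivity)]
  simp [Real.norm_eq_abs, sq_abs]

lemma prod_pointwise {c t : ℝ} (hc : 0 < c) {m : ℕ} (hm : 1 ≤ m)
    (y : EuclideanSpace ℝ (Fin m)) :
    Real.exp (-max 0 (c * ‖y‖^2 - t)) ≤ ∏ i, Real.exp (-(max 0 (c * (y i)^2 - t) / m)) := by
  rw [← Real.exp_sum]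
  apply Real.exp_le_exp.2
  have hsum : ∑ i : Fin m, -(max 0 (c * (y i)^2 - t) / m)
      = -((∑ i : Fin m, max 0 (c * (y i)^2 - t)) / m) := by
    simp only [← neg_div]
    rw [← Finset.sum_div, Finset.sum_neg_distrib, neg_div]
  rw [hsum]
  apply neg_le_neg
  have hmp : (0:ℝ) < m := by exact_mod_cast hm
  rw [div_le_iff₀ hmp]
  have hbound : ∀ i : Fin m, max 0 (c * (y i)^2 - t) ≤ max 0 (c * ‖y‖^2 - t) := by
    intro i
    apply max_le_max le_rfl
    have : (y i)^2 ≤ ‖y‖^2 := by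
      rw [euclid_norm_sq]
      exact Finset.single_le_sum (f := fun j : Fin m => (y j)^2)
        (fun j _ => sq_nonneg _) (Finset.mem_univ i)
    nlinarith
  calc ∑ i : Fin m, max 0 (c * (y i)^2 - t)
      ≤ ∑ _i : Fin m, max 0 (c * ‖y‖^2 - t) := Finset.sum_le_sum fun i _ => hbound i
    _ = max 0 (c * ‖y‖^2 - t) * m := by
        rw [Finset.sum_const, Finset.card_univ, Fintype.card_fin, nsmul_eq_mul, mul_comm]

lemma euclid_bound {c t : ℝ} (hc : 0 < c) (ht : 0 ≤ t) {m : ℕ} (hm : 1 ≤ m) :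
    ∫ y : EuclideanSpace ℝ (Fin m), Real.exp (-max 0 (c * ‖y‖^2 - t))
      ≤ (2*Real.sqrt (t/c) + 2*Real.sqrt (π * m / c)) ^ m := by
  set a := Real.sqrt (t/c) with ha
  have hmp : (0:ℝ) < m := by exact_mod_cast hm
  have hb : 0 < c / (m:ℝ) := by positivity
  have hint : Integrable (fun x : Fin m → ℝ => ∏ i, phiAux a (c/m) (x i)) :=
    Integrable.fintype_prod (fun _ => phiAux_integrable hb)
  have hmpres := EuclideanSpace.volume_preserving_symm_measurableEquiv_toLp (ι := Fin m)
  have hintE : Integrable (fun y : EuclideanSpace ℝ (Fin m) => ∏ i, phiAux a (c/m) (y i)) := by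
    have := (MeasurePreserving.integrable_comp_emb hmpres
      (MeasurableEquiv.measurableEmbedding _)).2 hint
    exact this
  have step1 : ∫ y : EuclideanSpace ℝ (Fin m), Real.exp (-max 0 (c * ‖y‖^2 - t))
      ≤ ∫ y : EuclideanSpace ℝ (Fin m), ∏ i, phiAux a (c/m) (y i) := by
    apply integral_mono_of_nonneg
    · filter_upwards with y using (Real.exp_pos _).le
    · exact hintE
    · filter_upwards with y
      calc Real.exp (-max 0 (c * ‖y‖^2 - t))
          ≤ ∏ i, Real.exp (-(max 0 (c * (y i)^2 - t) / m)) := prod_pointwise hc hm y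
        _ ≤ ∏ i, phiAux a (c/m) (y i) := by
            apply Finset.prod_le_prod (fun i _ => (Real.exp_pos _).le)
            intro i _
            exact phiAux_pointwise hc ht hm (y i)
  have step2 : ∫ y : EuclideanSpace ℝ (Fin m), ∏ i, phiAux a (c/m) (y i)
      = (∫ s, phiAux a (c/m) s) ^ m := by
    have := hmpres.integral_comp (MeasurableEquiv.measurableEmbedding _)
      (fun x : Fin m → ℝ => ∏ i, phiAux a (c/m) (x i))
    rw [show (∫ y : EuclideanSpace ℝ (Fin m), ∏ i, phiAux a (c/m) (y i))
        = ∫ x : EuclideanSpace ℝ (Fin m),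
          (fun x : Fin m → ℝ => ∏ i, phiAux a (c/m) (x i))
            ((MeasurableEquiv.toLp 2 (Fin m → ℝ)).symm x) from rfl, this]
    rw [MeasureTheory.volume_pi, MeasureTheory.integral_fintype_prod_eq_pow (ι := Fin m) (phiAux a (c/m)), Fintype.card_fin]
  have step3 : (∫ s, phiAux a (c/m) s) ^ m
      = (2*a + 2*Real.sqrt (π * m / c)) ^ m := by
    rw [phiAux_integral (Real.sqrt_nonneg _) hb]
    congr 2
    rw [div_div_eq_mul_div]
  linarith [step1, step2.le, step3.le, step2, step3]

lemma final_arith {m : ℕ} (hm : 1 ≤ m) {τ h K : ℝ} (hτ : 0 < τ) (hh : 0 < h) (hK : 0 < K) :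
    τ⁻¹ * Real.exp (-(τ*h)) * (2*Real.sqrt ((τ*h)/(τ*K)) + 2*Real.sqrt (π*m/(τ*K)))^m
      ≤ (4*Real.sqrt (π*m))^m * (1 + (τ*h)^(((m:ℝ))/2)) * τ^(-(((m:ℝ)+2)/2))
        * K^(-((m:ℝ)/2)) * Real.exp (-(τ*h)) := by
  have hmp : (0:ℝ) < m := by exact_mod_cast hm
  set u := Real.sqrt (τ*h) with hu_def
  set B := Real.sqrt (π*m) with hB_def
  set D := Real.sqrt (τ*K) with hD_def
  have hu : 0 ≤ u := Real.sqrt_nonneg _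
  have hD : 0 < D := Real.sqrt_pos.2 (by positivity)
  have hm1R : (1:ℝ) ≤ m := by exact_mod_cast hm
  have hB : 1 ≤ B := Real.one_le_sqrt.2 (by nlinarith [Real.pi_gt_three, hm1R])
  have hτK : (0:ℝ) < τ*K := mul_pos hτ hK
  have hbase : 2*Real.sqrt ((τ*h)/(τ*K)) + 2*Real.sqrt (π*m/(τ*K)) = (2*u+2*B)/D := by
    rw [Real.sqrt_div (by positivity) _, Real.sqrt_div (by positivity) _]
    ring
  have hDm : D^m = τ^((m:ℝ)/2) * K^((m:ℝ)/2) := by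
    rw [hD_def, Real.sqrt_eq_rpow, ← Real.rpow_natCast ((τ*K) ^ ((1:ℝ)/2)) m,
      ← Real.rpow_mul hτK.le, show (1:ℝ)/2*(m:ℝ) = (m:ℝ)/2 by ring,
      Real.mul_rpow hτ.le hK.le]
  have key1 : τ⁻¹ / D^m = τ^(-(((m:ℝ)+2)/2)) * K^(-((m:ℝ)/2)) := by
    rw [hDm, div_eq_mul_inv, mul_inv, ← Real.rpow_neg_one τ, ← Real.rpow_neg hτ.le,
      ← Real.rpow_neg hK.le, ← mul_assoc, ← Real.rpow_add hτ,
      show (-1 : ℝ) + -((m:ℝ)/2) = -(((m:ℝ)+2)/2) by ring]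
  have key2 : u^m = (τ*h)^((m:ℝ)/2) := by
    rw [hu_def, Real.sqrt_eq_rpow, ← Real.rpow_natCast ((τ*h) ^ ((1:ℝ)/2)) m,
      ← Real.rpow_mul (by positivity), show (1:ℝ)/2*(m:ℝ) = (m:ℝ)/2 by ring]
  have key3 : (2*u+2*B)^m ≤ (4*B)^m * (1 + u^m) := by
    have h1 : (2*u+2*B)^m ≤ (2*B*(1+u))^m := by
      apply pow_le_pow_left₀ (by positivity)
      nlinarith
    have h2 : (1+u)^m ≤ 2^m * (1+u^m) := by
      rcases le_total u 1 with hc | hc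
      · have : (1+u)^m ≤ 2^m := pow_le_pow_left₀ (by positivity) (by linarith) m
        have h3 : (0:ℝ) ≤ u^m := pow_nonneg hu m
        nlinarith [pow_pos (show (0:ℝ) < 2 by norm_num) m]
      · have : (1+u)^m ≤ (2*u)^m := pow_le_pow_left₀ (by positivity) (by linarith) m
        rw [mul_pow] at this
        nlinarith [pow_pos (show (0:ℝ) < 2 by norm_num) m, pow_nonneg hu m]
    calc (2*u+2*B)^m ≤ (2*B*(1+u))^m := h1
      _ = (2*B)^m * (1+u)^m := by rw [mul_pow]
      _ ≤ (2*B)^m * (2^m * (1+u^m)) := by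
          apply mul_le_mul_of_nonneg_left h2 (by positivity)
      _ = (4*B)^m * (1+u^m) := by
          rw [← mul_assoc, ← mul_pow]
          ring_nf
  have hfac : (0:ℝ) ≤ τ^(-(((m:ℝ)+2)/2)) * K^(-((m:ℝ)/2)) * Real.exp (-(τ*h)) := by positivity
  calc τ⁻¹ * Real.exp (-(τ*h)) * (2*Real.sqrt ((τ*h)/(τ*K)) + 2*Real.sqrt (π*m/(τ*K)))^m
      = (2*u+2*B)^m * (τ^(-(((m:ℝ)+2)/2)) * K^(-((m:ℝ)/2)) * Real.exp (-(τ*h))) := by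
        rw [hbase, div_pow, ← key1]
        ring
    _ ≤ ((4*B)^m * (1 + u^m)) * (τ^(-(((m:ℝ)+2)/2)) * K^(-((m:ℝ)/2)) * Real.exp (-(τ*h))) :=
        mul_le_mul_of_nonneg_right key3 hfac
    _ = (4*B)^m * (1 + (τ*h)^(((m:ℝ))/2)) * τ^(-(((m:ℝ)+2)/2)) * K^(-((m:ℝ)/2))
        * Real.exp (-(τ*h)) := by rw [← key2]; ring

/-- For `n ≥ 2` there is `C_n > 0`, depending only on `n`, such that for
all `τ > 0`, `h > 0`, `K > 0`, every unit vector `v̂' ∈ ℝ^{n−1}` and `ξ = iτ(v̂',0) − τe_n`,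
the function `E_ξ(x) = exp(iτ v̂'·x' − τ x_n)` is integrable on
`{x : x_n > max(h, K|x'|²)}` and
`|∫ E_ξ| ≤ C_n (1+(τh)^{(n−1)/2}) τ^{−(n+1)/2} K^{−(n−1)/2} e^{−τh}`. -/
theorem cgo_I1_estimate (n : ℕ) (hn : 2 ≤ n) :
    ∃ C : ℝ, 0 < C ∧
      ∀ (τ h K : ℝ), 0 < τ → 0 < h → 0 < K →
        ∀ (v : EuclideanSpace ℝ (Fin (n - 1))), ‖v‖ = 1 →
          MeasureTheory.IntegrableOn
            (fun x : EuclideanSpace ℝ (Fin (n - 1)) × ℝ =>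
              Complex.exp (Complex.I * (τ : ℂ) * ((inner ℝ v x.1 : ℝ) : ℂ) - (τ : ℂ) * (x.2 : ℂ)))
            {x : EuclideanSpace ℝ (Fin (n - 1)) × ℝ | max h (K * ‖x.1‖ ^ 2) < x.2} volume ∧
          norm
            (∫ x in {x : EuclideanSpace ℝ (Fin (n - 1)) × ℝ | max h (K * ‖x.1‖ ^ 2) < x.2},
              Complex.exp (Complex.I * (τ : ℂ) * ((inner ℝ v x.1 : ℝ) : ℂ) - (τ : ℂ) * (x.2 : ℂ)))
            ≤ C * (1 + (τ * h) ^ (((n : ℝ) - 1) / 2)) * τ ^ (-(((n : ℝ) + 1) / 2))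
                * K ^ (-(((n : ℝ) - 1) / 2)) * Real.exp (-τ * h) := by
  set m := n - 1 with hm_def
  have hm1 : 1 ≤ m := by omega
  have hmcast : ((m : ℕ) : ℝ) = (n:ℝ) - 1 := by
    rw [hm_def, Nat.cast_sub (by omega)]
    norm_num
  have hmp : (0:ℝ) < m := by exact_mod_cast hm1
  have hsqrtpos : 0 < Real.sqrt (π*m) := Real.sqrt_pos.2 (by positivity)
  refine ⟨(4*Real.sqrt (π*m))^m, by positivity, ?_⟩
  intro τ h K hτ hh hK v hv
  set S : Set (EuclideanSpace ℝ (Fin m) × ℝ) := {x | max h (K * ‖x.1‖^2) < x.2} with hS_def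
  have hS : MeasurableSet S := by
    have : IsOpen S := isOpen_lt (Continuous.max continuous_const
      (continuous_const.mul ((continuous_fst.norm).pow 2))) continuous_snd
    exact this.measurableSet
  set f : EuclideanSpace ℝ (Fin m) × ℝ → ℂ := fun x =>
    Complex.exp (Complex.I * (τ:ℂ) * ((inner ℝ v x.1 : ℝ) : ℂ) - (τ:ℂ) * (x.2:ℂ)) with hf_def
  have hf_cont : Continuous f := by
    apply Complex.continuous_exp.comp
    apply Continuous.sub
    · exact continuous_const.mul (Complex.continuous_ofReal.comp
        (Continuous.inner continuous_const continuous_fst))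
    · exact continuous_const.mul (Complex.continuous_ofReal.comp continuous_snd)
  have hnorm : ∀ x : EuclideanSpace ℝ (Fin m) × ℝ, ‖f x‖ = Real.exp (-(τ * x.2)) := by
    intro x
    rw [hf_def]
    simp only [Complex.norm_exp]
    congr 1
    simp [Complex.sub_re, Complex.mul_re, Complex.I_re, Complex.I_im, Complex.ofReal_re,
      Complex.ofReal_im, Complex.mul_im]
  -- dominating function
  have hg1 : Integrable (fun y : EuclideanSpace ℝ (Fin m) => Real.exp (-(τ*K/2) * ‖y‖^2)) :=
    aux_integrable_rexp_gauss (by positivity)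
  have hg2 : Integrable (fun s : ℝ => Set.indicator (Set.Ioi h)
      (fun s => Real.exp (-(τ/2) * s)) s) := by
    rw [integrable_indicator_iff measurableSet_Ioi]
    exact exp_neg_integrableOn_Ioi h (by positivity)
  set g : EuclideanSpace ℝ (Fin m) × ℝ → ℝ := fun x =>
    Real.exp (-(τ*K/2) * ‖x.1‖^2) * Set.indicator (Set.Ioi h)
      (fun s => Real.exp (-(τ/2) * s)) x.2 with hg_def
  have hg : Integrable g := by
    have := Integrable.mul_prod hg1 hg2
    rwa [← MeasureTheory.Measure.volume_eq_prod] at this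
  have hgnn : ∀ x, 0 ≤ g x := by
    intro x
    have : (0:ℝ) ≤ Set.indicator (Set.Ioi h) (fun s => Real.exp (-(τ/2) * s)) x.2 :=
      Set.indicator_nonneg (fun _ _ => (Real.exp_pos _).le) _
    positivity
  set F : EuclideanSpace ℝ (Fin m) × ℝ → ℝ := fun x => Real.exp (-(τ * x.2)) with hF_def
  have hbound : ∀ x, Set.indicator S F x ≤ g x := by
    intro x
    by_cases hx : x ∈ S
    · rw [Set.indicator_of_mem hx]
      have hx2 : max h (K * ‖x.1‖^2) < x.2 := hx
      have h2 : x.2 ∈ Set.Ioi h := lt_of_le_of_lt (le_max_left _ _) hx2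
      rw [hg_def]
      simp only
      rw [Set.indicator_of_mem h2, ← Real.exp_add]
      apply Real.exp_le_exp.2
      have hKx : K * ‖x.1‖^2 ≤ x.2 := le_of_lt (lt_of_le_of_lt (le_max_right _ _) hx2)
      nlinarith [mul_le_mul_of_nonneg_left hKx hτ.le]
    · rw [Set.indicator_of_notMem hx]
      exact hgnn x
  have heq : ∀ x, Set.indicator S F x = ‖Set.indicator S f x‖ := by
    intro x
    by_cases hx : x ∈ S
    · rw [Set.indicator_of_mem hx, Set.indicator_of_mem hx, hnorm]
    · simp [Set.indicator_of_notMem hx]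
  have hF_cont : Continuous F := by
    apply Real.continuous_exp.comp
    exact (continuous_const.mul continuous_snd).neg
  have hindF : Integrable (Set.indicator S F) := by
    apply Integrable.mono' hg (hF_cont.aestronglyMeasurable.indicator hS)
    filter_upwards with x
    rw [Real.norm_eq_abs, abs_of_nonneg (Set.indicator_nonneg
      (fun y _ => (Real.exp_pos _).le) x)]
    exact hbound x
  have hindf : Integrable (Set.indicator S f) := by
    apply Integrable.mono' hindF ((hf_cont.aestronglyMeasurable).indicator hS)
    filter_upwards with x
    rw [← heq x]
  have hIntOn : IntegrableOn f S volume := (integrable_indicator_iff hS).1 hindf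
  refine ⟨hIntOn, ?_⟩
  -- bound the integral
  have step0 : ‖∫ x in S, f x‖ ≤ ∫ x, Set.indicator S F x := by
    calc ‖∫ x in S, f x‖ ≤ ∫ x in S, ‖f x‖ := norm_integral_le_integral_norm _
      _ = ∫ x in S, F x := by
          apply integral_congr_ae
          filter_upwards with x using hnorm x
      _ = ∫ x, Set.indicator S F x := (integral_indicator hS).symm
  have fub : ∫ x, Set.indicator S F x
      = ∫ y : EuclideanSpace ℝ (Fin m), ∫ s : ℝ, Set.indicator S F (y, s) := by
    rw [MeasureTheory.Measure.volume_eq_prod]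
    apply MeasureTheory.integral_prod
    rwa [← MeasureTheory.Measure.volume_eq_prod]
  have inner_eq : ∀ y : EuclideanSpace ℝ (Fin m), (∫ s : ℝ, Set.indicator S F (y, s))
      = τ⁻¹ * Real.exp (-(τ*h)) * Real.exp (-max 0 (τ*K * ‖y‖^2 - τ*h)) := by
    intro y
    have hres : (fun s : ℝ => Set.indicator S F (y, s))
        = Set.indicator (Set.Ioi (max h (K * ‖y‖^2))) (fun s => Real.exp (-(τ * s))) := by
      ext s
      by_cases hs : max h (K * ‖y‖^2) < s
      · rw [Set.indicator_of_mem (show (y,s) ∈ S from hs),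
          Set.indicator_of_mem (Set.mem_Ioi.2 hs)]
      · rw [Set.indicator_of_notMem (show (y,s) ∉ S from hs),
          Set.indicator_of_notMem (by simpa using hs)]
    rw [hres, integral_indicator measurableSet_Ioi, aux_integral_exp_neg_mul_Ioi hτ,
      mul_assoc, ← Real.exp_add]
    congr 2
    rcases le_total (K*‖y‖^2) h with hc | hc
    · rw [max_eq_left hc, max_eq_left (by nlinarith [mul_le_mul_of_nonneg_left hc hτ.le])]
      ring
    · rw [max_eq_right hc, max_eq_right (by nlinarith [mul_le_mul_of_nonneg_left hc hτ.le])]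
      ring
  have step1 : ∫ x, Set.indicator S F x
      ≤ τ⁻¹ * Real.exp (-(τ*h))
        * (2*Real.sqrt ((τ*h)/(τ*K)) + 2*Real.sqrt (π*m/(τ*K)))^m := by
    rw [fub]
    have : (∫ y : EuclideanSpace ℝ (Fin m), ∫ s : ℝ, Set.indicator S F (y, s))
        = τ⁻¹ * Real.exp (-(τ*h))
          * ∫ y : EuclideanSpace ℝ (Fin m), Real.exp (-max 0 (τ*K * ‖y‖^2 - τ*h)) := by
      rw [← MeasureTheory.integral_const_mul]
      apply integral_congr_ae
      filter_upwards with y using inner_eq y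
    rw [this]
    apply mul_le_mul_of_nonneg_left _ (by positivity)
    exact euclid_bound (by positivity) (by positivity) hm1
  have step2 := final_arith hm1 hτ hh hK (m := m)
  rw [show ((n:ℝ)-1) = ((m:ℕ):ℝ) from hmcast.symm,
    show -(((n:ℝ)+1)/2) = -((((m:ℕ):ℝ)+2)/2) by rw [hmcast]; ring,
    show -τ*h = -(τ*h) by ring]
  exact le_trans (le_trans step0 step1) step2
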